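/- Let $X, Y$ be Banach spaces, $F : X \rightrightarrows Y$ a closed convex set-valued mapping, $A \subseteq X$ closed convex, $\bar y \in Y$, $S := F^{-1}(\bar y) \cap A$, $x \in S$, and $\tau > 0$. Suppose for all $h \in X$: $d(h, T(S,x)) \leq \tau(d(0, DF(x,\bar y)(h)) + d(h, T(A,x)))$. Then $N(S,x) \cap B_{X^*} \subseteq \tau(D^*F(x,\bar y)(B_{Y^*}) + N(A,x) \cap B_{X^*})$. -/

import Mathlib

open Set Metric Filter Topology Pointwise

noncomputable section

/-- Contingent cone of a convex set: closure of ⋃_{t>0} (A - a)/t. -/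
def contCone {X : Type*} [NormedAddCommGroup X] [NormedSpace ℝ X] (A : Set X) (a : X) : Set X :=
  closure {v : X | ∃ t : ℝ, 0 < t ∧ a + t • v ∈ A}

/-- Normal cone of a convex set, as a set of continuous linear functionals. -/
def nCone {X : Type*} [NormedAddCommGroup X] [NormedSpace ℝ X] (A : Set X) (a : X) :
    Set (X →L[ℝ] ℝ) :=
  {f | ∀ u ∈ A, f (u - a) ≤ 0}

section Aux

variable {E : Type*} [NormedAddCommGroup E] [NormedSpace ℝ E]

lemma le_of_forall_pos_le_add' {a b : ℝ} (h : ∀ ε : ℝ, 0 < ε → a ≤ b + ε) : a ≤ b := by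
  by_contra h'
  push_neg at h'
  have := h ((a - b) / 2) (by linarith)
  linarith

lemma le_infDist' {s : Set E} (hs : s.Nonempty) {x : E} {b : ℝ}
    (h : ∀ y ∈ s, b ≤ dist x y) : b ≤ infDist x s := by
  refine le_of_not_gt fun hlt => ?_
  obtain ⟨y, hy, hdy⟩ := (Metric.infDist_lt_iff hs).1 hlt
  exact absurd (h y hy) (by linarith)

lemma sub_mem_contCone {A : Set E} {a u : E} (hu : u ∈ A) : u - a ∈ contCone A a := by
  refine subset_closure ⟨1, one_pos, ?_⟩
  rw [one_smul, add_sub_cancel]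
  exact hu

lemma zero_mem_contCone {A : Set E} {a : E} (ha : a ∈ A) : (0 : E) ∈ contCone A a := by
  refine subset_closure ⟨1, one_pos, by simpa using ha⟩

lemma smul_mem_contCone {A : Set E} {a : E} {c : ℝ} (hc : 0 < c) {v : E}
    (hv : v ∈ contCone A a) : c • v ∈ contCone A a := by
  have hmt : MapsTo (fun v : E => c • v) {v : E | ∃ t : ℝ, 0 < t ∧ a + t • v ∈ A}
      {v : E | ∃ t : ℝ, 0 < t ∧ a + t • v ∈ A} := by
    rintro v ⟨t, ht, hA⟩
    exact ⟨t / c, div_pos ht hc, by rwa [smul_smul, div_mul_cancel₀ _ hc.ne']⟩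
  exact map_mem_closure (continuous_const_smul c) hv hmt

lemma convex_contCone {A : Set E} (hA : Convex ℝ A) (a : E) : Convex ℝ (contCone A a) := by
  refine Convex.closure ?_
  rintro v₁ ⟨t₁, ht₁, h₁⟩ v₂ ⟨t₂, ht₂, h₂⟩ α β hα hβ hαβ
  have hμν : 0 < α / t₁ + β / t₂ := by
    rcases hα.lt_or_eq with h | h
    · exact add_pos_of_pos_of_nonneg (div_pos h ht₁) (div_nonneg hβ ht₂.le)
    · have hβ' : 0 < β := by linarith
      exact add_pos_of_nonneg_of_pos (div_nonneg hα ht₁.le) (div_pos hβ' ht₂)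
  set t : ℝ := (α / t₁ + β / t₂)⁻¹ with hts
  refine ⟨t, inv_pos.2 hμν, ?_⟩
  have hw := hA h₁ h₂ (a := t * (α / t₁)) (b := t * (β / t₂))
    (mul_nonneg (inv_pos.2 hμν).le (div_nonneg hα ht₁.le))
    (mul_nonneg (inv_pos.2 hμν).le (div_nonneg hβ ht₂.le))
    (by rw [← mul_add]; exact inv_mul_cancel₀ hμν.ne')
  have hkey : t * (α / t₁ + β / t₂) = 1 := inv_mul_cancel₀ hμν.ne'
  have heq : (t * (α / t₁)) • (a + t₁ • v₁) + (t * (β / t₂)) • (a + t₂ • v₂)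
      = a + t • (α • v₁ + β • v₂) := by
    have h1 : t * (α / t₁) + t * (β / t₂) = 1 := by rw [← mul_add]; exact hkey
    match_scalars
    · linarith
    · field_simp
    · field_simp
  rwa [heq] at hw

lemma add_mem_contCone {A : Set E} (hA : Convex ℝ A) {a : E} {v w : E}
    (hv : v ∈ contCone A a) (hw : w ∈ contCone A a) : v + w ∈ contCone A a := by
  have hmid := (convex_contCone hA a) hv hw (by norm_num : (0:ℝ) ≤ 1/2)
    (by norm_num : (0:ℝ) ≤ 1/2) (by norm_num)
  have := smul_mem_contCone (two_pos) hmid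
  rwa [smul_add, smul_smul, smul_smul, show (2:ℝ) * (1/2) = 1 by norm_num, one_smul, one_smul]
    at this

lemma infDist_add_le' {s : Set E} (hadd : ∀ u ∈ s, ∀ v ∈ s, u + v ∈ s) (hne : s.Nonempty)
    (h₁ h₂ : E) : infDist (h₁ + h₂) s ≤ infDist h₁ s + infDist h₂ s := by
  refine le_of_forall_pos_le_add' fun ε hε => ?_
  obtain ⟨u, hu, hdu⟩ := (Metric.infDist_lt_iff hne).1
    (show infDist h₁ s < infDist h₁ s + ε / 2 by linarith)
  obtain ⟨v, hv, hdv⟩ := (Metric.infDist_lt_iff hne).1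
    (show infDist h₂ s < infDist h₂ s + ε / 2 by linarith)
  have hle : infDist (h₁ + h₂) s ≤ dist (h₁ + h₂) (u + v) := infDist_le_dist_of_mem (hadd u hu v hv)
  have htri : dist (h₁ + h₂) (u + v) ≤ dist h₁ u + dist h₂ v := dist_add_add_le _ _ _ _
  linarith

lemma infDist_smul_le' {s : Set E} (hsmul : ∀ c : ℝ, 0 < c → ∀ v ∈ s, c • v ∈ s)
    (hne : s.Nonempty) {c : ℝ} (hc : 0 < c) (h : E) :
    infDist (c • h) s ≤ c * infDist h s := by
  refine le_of_forall_pos_le_add' fun ε hε => ?_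
  obtain ⟨u, hu, hdu⟩ := (Metric.infDist_lt_iff hne).1
    (show infDist h s < infDist h s + ε / c by
      have : 0 < ε / c := div_pos hε hc
      linarith)
  have hle : infDist (c • h) s ≤ dist (c • h) (c • u) := infDist_le_dist_of_mem (hsmul c hc u hu)
  rw [dist_smul₀, Real.norm_eq_abs, abs_of_pos hc] at hle
  have h3 : c * (ε / c) = ε := mul_div_cancel₀ ε hc.ne'
  nlinarith

lemma sandwich_cone {E : Type*} [AddCommGroup E] [Module ℝ E]
    (s : E → ℝ) (hs_add : ∀ y z, s (y + z) ≤ s y + s z)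
    (hs_hom : ∀ c : ℝ, 0 < c → ∀ z, s (c • z) = c * s z)
    (T : Set E) (h0 : (0 : E) ∈ T)
    (hT_add : ∀ v ∈ T, ∀ w ∈ T, v + w ∈ T)
    (hT_smul : ∀ c : ℝ, 0 < c → ∀ v ∈ T, c • v ∈ T)
    (L : E →ₗ[ℝ] ℝ) (hL : ∀ w ∈ T, L w ≤ s w) :
    ∃ Λ : E →ₗ[ℝ] ℝ, (∀ z, Λ z ≤ s z) ∧ ∀ w ∈ T, L w ≤ Λ w := by
  have hs0 : s 0 = 0 := by
    have h2 := hs_hom 2 two_pos 0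
    rw [smul_zero] at h2; linarith
  haveI : Nonempty T := ⟨⟨0, h0⟩⟩
  set Q : E → ℝ := fun z => ⨅ w : T, (s (z + (w : E)) - L w) with hQdef
  have hbdd : ∀ z, BddBelow (Set.range fun w : T => s (z + (w : E)) - L w) := by
    intro z
    refine ⟨-s (-z), ?_⟩
    rintro r ⟨w, rfl⟩
    have h1 : L (w : E) ≤ s w := hL w w.2
    have h2 : s (w : E) ≤ s (z + w) + s (-z) := by
      have h3 := hs_add (z + (w : E)) (-z)
      have h4 : z + (w : E) + -z = (w : E) := by abel
      rw [h4] at h3; linarith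
    simp only [mem_setOf_eq]
    linarith
  have hQle : ∀ z, ∀ w ∈ T, Q z ≤ s (z + w) - L w := by
    intro z w hw
    exact ciInf_le (hbdd z) ⟨w, hw⟩
  have hleQ : ∀ (z : E) (b : ℝ), (∀ w ∈ T, b ≤ s (z + w) - L w) → b ≤ Q z :=
    fun z b hb => le_ciInf fun w => hb w w.2
  have hQs : ∀ z, Q z ≤ s z := by
    intro z
    have := hQle z 0 h0
    simpa using this
  have hQ0 : 0 ≤ Q 0 := by
    refine hleQ 0 0 fun w hw => ?_
    rw [zero_add]
    linarith [hL w hw]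
  have hexlt : ∀ (z : E) (b : ℝ), Q z < b → ∃ w : T, s (z + (w : E)) - L w < b := by
    intro z b hb
    exact exists_lt_of_ciInf_lt hb
  have hQadd : ∀ y z, Q (y + z) ≤ Q y + Q z := by
    intro y z
    refine le_of_forall_pos_le_add' fun ε hε => ?_
    obtain ⟨w₁, hw₁⟩ := hexlt y (Q y + ε / 2) (by linarith)
    obtain ⟨w₂, hw₂⟩ := hexlt z (Q z + ε / 2) (by linarith)
    have hmem := hT_add _ w₁.2 _ w₂.2
    have h1 := hQle (y + z) _ hmem
    have hrw : y + z + ((w₁ : E) + (w₂ : E)) = (y + (w₁ : E)) + (z + (w₂ : E)) := by abel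
    rw [hrw, map_add] at h1
    have hsa := hs_add (y + (w₁ : E)) (z + (w₂ : E))
    linarith
  have hQhom_le : ∀ c : ℝ, 0 < c → ∀ z, Q (c • z) ≤ c * Q z := by
    intro c hc z
    refine le_of_forall_pos_le_add' fun ε hε => ?_
    obtain ⟨w, hw⟩ := hexlt z (Q z + ε / c) (by linarith [div_pos hε hc])
    have hmem := hT_smul c hc _ w.2
    have h1 := hQle (c • z) _ hmem
    have h2 : c • z + c • (w : E) = c • (z + (w : E)) := (smul_add c z w).symm
    rw [h2, hs_hom c hc, map_smul] at h1
    have h3 : c * (ε / c) = ε := mul_div_cancel₀ ε hc.ne'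
    simp only [smul_eq_mul] at h1
    nlinarith
  have hQhom : ∀ c : ℝ, 0 < c → ∀ z, Q (c • z) = c * Q z := by
    intro c hc z
    refine le_antisymm (hQhom_le c hc z) ?_
    have h1 := hQhom_le c⁻¹ (inv_pos.2 hc) (c • z)
    rw [inv_smul_smul₀ hc.ne'] at h1
    have h2 := mul_le_mul_of_nonneg_left h1 hc.le
    rw [← mul_assoc, mul_inv_cancel₀ hc.ne', one_mul] at h2
    exact h2
  set f₀ : E →ₗ.[ℝ] ℝ := ⟨⊥, 0⟩ with hf₀
  have hdom : ∀ z : f₀.domain, f₀ z ≤ Q z := by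
    rintro ⟨z, hz⟩
    have hz0 : z = 0 := by change z ∈ (⊥ : Submodule ℝ E) at hz; simpa using hz
    subst hz0
    change (0:ℝ) ≤ Q 0; exact hQ0
  obtain ⟨Λ, hΛext, hΛle⟩ := exists_extension_of_le_sublinear f₀ Q hQhom hQadd hdom
  refine ⟨Λ, fun z => (hΛle z).trans (hQs z), fun w hw => ?_⟩
  have h1 := (hΛle (-w)).trans (hQle (-w) w hw)
  rw [neg_add_cancel, hs0, map_neg] at h1
  linarith

end Aux

set_option maxHeartbeats 1000000 in
theorem stmt14 {X Y : Type*} [NormedAddCommGroup X] [NormedSpace ℝ X] [CompleteSpace X]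
    [NormedAddCommGroup Y] [NormedSpace ℝ Y] [CompleteSpace Y]
    (F : X → Set Y) (hFcl : IsClosed {p : X × Y | p.2 ∈ F p.1})
    (hFcv : Convex ℝ {p : X × Y | p.2 ∈ F p.1})
    (A : Set X) (hAcl : IsClosed A) (hAcv : Convex ℝ A)
    (ybar : Y) (x : X) (hx : x ∈ {x : X | ybar ∈ F x} ∩ A)
    (τ : ℝ) (hτ : 0 < τ)
    (hineq : ∀ h : X,
      EMetric.infEdist h (contCone ({x : X | ybar ∈ F x} ∩ A) x) ≤
        ENNReal.ofReal τ *
          (EMetric.infEdist (0 : Y)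
              {v : Y | (h, v) ∈ contCone {p : X × Y | p.2 ∈ F p.1} (x, ybar)} +
            EMetric.infEdist h (contCone A x))) :
    nCone ({x : X | ybar ∈ F x} ∩ A) x ∩ {f : X →L[ℝ] ℝ | ‖f‖ ≤ 1} ⊆
      τ • ({f : X →L[ℝ] ℝ | ∃ g : Y →L[ℝ] ℝ, ‖g‖ ≤ 1 ∧
              ∀ p ∈ {p : X × Y | p.2 ∈ F p.1}, f (p.1 - x) - g (p.2 - ybar) ≤ 0} +
            nCone A x ∩ {f : X →L[ℝ] ℝ | ‖f‖ ≤ 1}) := by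
  rintro f ⟨hfN, hfB⟩
  have hτ0 : (0:ℝ) ≤ τ := hτ.le
  set S : Set X := {x : X | ybar ∈ F x} ∩ A with hS
  set G : Set (X × Y) := {p : X × Y | p.2 ∈ F p.1} with hG
  have hxS : x ∈ S := hx
  have hxA : x ∈ A := hx.2
  have hxG : (x, ybar) ∈ G := hx.1
  have h0TA : (0 : X) ∈ contCone A x := zero_mem_contCone hxA
  have h0TS : (0 : X) ∈ contCone S x := zero_mem_contCone hxS
  have h0T : (0 : X × Y) ∈ contCone G (x, ybar) := zero_mem_contCone hxG
  have hTAne : (contCone A x).Nonempty := ⟨0, h0TA⟩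
  have hTSne : (contCone S x).Nonempty := ⟨0, h0TS⟩
  have hTA_add : ∀ u ∈ contCone A x, ∀ v ∈ contCone A x, u + v ∈ contCone A x :=
    fun u hu v hv => add_mem_contCone hAcv hu hv
  have hTA_smul : ∀ c : ℝ, 0 < c → ∀ v ∈ contCone A x, c • v ∈ contCone A x :=
    fun c hc v hv => smul_mem_contCone hc hv
  -- f is nonpositive on the tangent cone of S
  have hf_TS : ∀ w ∈ contCone S x, f w ≤ 0 := by
    intro w hw
    have hsub : {v : X | ∃ t : ℝ, 0 < t ∧ x + t • v ∈ S} ⊆ {v : X | f v ≤ 0} := by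
      rintro v ⟨t, ht, hv⟩
      have h1 := hfN _ hv
      rw [add_sub_cancel_left, map_smul] at h1
      simp only [smul_eq_mul, mem_setOf_eq] at h1 ⊢
      nlinarith
    exact closure_minimal hsub (isClosed_le f.continuous continuous_const) hw
  -- f h is dominated by the distance to the tangent cone of S
  have hfd : ∀ h : X, f h ≤ infDist h (contCone S x) := by
    intro h
    refine le_infDist' hTSne fun w hw => ?_
    have h1 : f h = f (h - w) + f w := by rw [map_sub]; ring
    have h2 : f (h - w) ≤ ‖h - w‖ := by
      calc f (h - w) ≤ ‖f (h - w)‖ := le_abs_self _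
      _ ≤ ‖f‖ * ‖h - w‖ := f.le_opNorm _
      _ ≤ 1 * ‖h - w‖ := mul_le_mul_of_nonneg_right hfB (norm_nonneg _)
      _ = ‖h - w‖ := one_mul _
    rw [dist_eq_norm]
    linarith [hf_TS w hw]
  set s : X × Y → ℝ := fun z => τ * ‖z.2‖ + τ * infDist z.1 (contCone A x) with hsdef
  -- the key inequality
  have key : ∀ w ∈ contCone G (x, ybar), f w.1 ≤ s w := by
    rintro ⟨h, v⟩ hw
    have step : ∀ u ∈ contCone A x, f h ≤ τ * (‖v‖ + dist h u) := by
      intro u hu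
      have hmul : ENNReal.ofReal τ *
          (EMetric.infEdist (0 : Y) {v : Y | (h, v) ∈ contCone G (x, ybar)} +
            EMetric.infEdist h (contCone A x)) ≤
          ENNReal.ofReal τ * (edist (0 : Y) v + edist h u) := by
        gcongr
        · exact EMetric.infEdist_le_edist_of_mem hw
        · exact EMetric.infEdist_le_edist_of_mem hu
      have hrw : ENNReal.ofReal τ * (edist (0 : Y) v + edist h u)
          = ENNReal.ofReal (τ * (‖v‖ + dist h u)) := by
        rw [edist_dist, edist_dist, dist_zero_left,
          ← ENNReal.ofReal_add (norm_nonneg v) dist_nonneg, ← ENNReal.ofReal_mul hτ0]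
      have h1 : EMetric.infEdist h (contCone S x) ≤ ENNReal.ofReal (τ * (‖v‖ + dist h u)) :=
        (hineq h).trans (hmul.trans_eq hrw)
      have h2 : infDist h (contCone S x) ≤ τ * (‖v‖ + dist h u) := by
        have h3 := ENNReal.toReal_mono ENNReal.ofReal_ne_top h1
        rw [ENNReal.toReal_ofReal (by positivity)] at h3
        exact h3
      linarith [hfd h]
    have h4 : (f h - τ * ‖v‖) / τ ≤ infDist h (contCone A x) := by
      refine le_infDist' hTAne fun u hu => ?_
      rw [div_le_iff₀ hτ]
      nlinarith [step u hu]
    have h5 : f h - τ * ‖v‖ ≤ τ * infDist h (contCone A x) := by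
      rw [div_le_iff₀ hτ] at h4
      nlinarith
    simp only [hsdef]
    linarith
  have h0dist : infDist (0 : X) (contCone A x) = 0 :=
    le_antisymm (by simpa using infDist_le_dist_of_mem (x := (0:X)) h0TA) infDist_nonneg
  have hs_add : ∀ y z, s (y + z) ≤ s y + s z := by
    intro y z
    simp only [hsdef, Prod.fst_add, Prod.snd_add]
    have h1 : ‖y.2 + z.2‖ ≤ ‖y.2‖ + ‖z.2‖ := norm_add_le _ _
    have h2 := infDist_add_le' hTA_add hTAne y.1 z.1
    nlinarith [mul_le_mul_of_nonneg_left h1 hτ0, mul_le_mul_of_nonneg_left h2 hτ0]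
  have hs_hom : ∀ c : ℝ, 0 < c → ∀ z, s (c • z) = c * s z := by
    intro c hc z
    simp only [hsdef, Prod.smul_fst, Prod.smul_snd]
    rw [norm_smul, Real.norm_eq_abs, abs_of_pos hc]
    have h1 : infDist (c • z.1) (contCone A x) = c * infDist z.1 (contCone A x) := by
      refine le_antisymm (infDist_smul_le' hTA_smul hTAne hc z.1) ?_
      have h2 := infDist_smul_le' hTA_smul hTAne (inv_pos.2 hc) (c • z.1)
      rw [inv_smul_smul₀ hc.ne'] at h2
      have h3 := mul_le_mul_of_nonneg_left h2 hc.le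
      rw [← mul_assoc, mul_inv_cancel₀ hc.ne', one_mul] at h3
      linarith
    rw [h1]; ring
  set L : X × Y →ₗ[ℝ] ℝ := (f : X →ₗ[ℝ] ℝ).comp (LinearMap.fst ℝ X Y) with hLdef
  have hLkey : ∀ w ∈ contCone G (x, ybar), L w ≤ s w := by
    intro w hw
    simpa [hLdef] using key w hw
  obtain ⟨Λ, hΛs, hΛT⟩ := sandwich_cone s hs_add hs_hom (contCone G (x, ybar)) h0T
    (fun v hv w hw => add_mem_contCone hFcv hv hw)
    (fun c hc v hv => smul_mem_contCone hc hv) L hLkey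
  have hsplit : ∀ (h : X) (v : Y), Λ (h, v) = Λ (h, 0) + Λ (0, v) := by
    intro h v
    have he : ((h, v) : X × Y) = ((h, (0:Y)) + ((0:X), v)) := by simp
    rw [he, map_add]
  have hΛ₁le : ∀ h : X, Λ (h, 0) ≤ τ * infDist h (contCone A x) := by
    intro h
    have := hΛs (h, 0)
    simpa [hsdef] using this
  have hΛ₁norm : ∀ h : X, |Λ (h, 0)| ≤ τ * ‖h‖ := by
    intro h
    have hdle : ∀ h' : X, infDist h' (contCone A x) ≤ ‖h'‖ := fun h' => by
      simpa using infDist_le_dist_of_mem (x := h') h0TA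
    rw [abs_le]
    constructor
    · have h1 := hΛ₁le (-h)
      have h2 := hdle (-h)
      rw [norm_neg] at h2
      have h3 : Λ ((-h : X), (0:Y)) = -Λ (h, 0) := by
        rw [show ((-h : X), (0:Y)) = -((h : X), (0:Y)) by simp, map_neg]
      rw [h3] at h1
      nlinarith
    · have h1 := hΛ₁le h
      have h2 := hdle h
      nlinarith
  have hΛ₂le : ∀ v : Y, Λ (0, v) ≤ τ * ‖v‖ := by
    intro v
    have := hΛs (0, v)
    simpa [hsdef, h0dist] using this
  have hΛ₂norm : ∀ v : Y, |Λ ((0:X), v)| ≤ τ * ‖v‖ := by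
    intro v
    rw [abs_le]
    refine ⟨?_, hΛ₂le v⟩
    have h1 := hΛ₂le (-v)
    have h3 : Λ ((0:X), (-v : Y)) = -Λ (0, v) := by
      rw [show ((0:X), (-v : Y)) = -(((0:X), v) : X × Y) by simp, map_neg]
    rw [h3, norm_neg] at h1
    linarith
  set Λ₁ : X →ₗ[ℝ] ℝ := Λ.comp (LinearMap.inl ℝ X Y) with hΛ1def
  set Λ₂ : Y →ₗ[ℝ] ℝ := Λ.comp (LinearMap.inr ℝ X Y) with hΛ2def
  have happ1 : ∀ h : X, Λ₁ h = Λ (h, 0) := fun h => by simp [hΛ1def]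
  have happ2 : ∀ v : Y, Λ₂ v = Λ (0, v) := fun v => by simp [hΛ2def]
  set Λ₁c : X →L[ℝ] ℝ := Λ₁.mkContinuous τ
    (fun h => by rw [Real.norm_eq_abs, happ1]; exact hΛ₁norm h) with hΛ1cdef
  set Λ₂c : Y →L[ℝ] ℝ := Λ₂.mkContinuous τ
    (fun v => by rw [Real.norm_eq_abs, happ2]; exact hΛ₂norm v) with hΛ2cdef
  have happ1c : ∀ h : X, Λ₁c h = Λ (h, 0) := fun h => by
    rw [hΛ1cdef, LinearMap.mkContinuous_apply, happ1]
  have happ2c : ∀ v : Y, Λ₂c v = Λ (0, v) := fun v => by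
    rw [hΛ2cdef, LinearMap.mkContinuous_apply, happ2]
  have hn1 : ‖Λ₁c‖ ≤ τ := Λ₁.mkContinuous_norm_le hτ0 _
  have hn2 : ‖Λ₂c‖ ≤ τ := Λ₂.mkContinuous_norm_le hτ0 _
  have hτinv : (0:ℝ) ≤ τ⁻¹ := inv_nonneg.2 hτ0
  refine Set.mem_smul_set.2 ⟨τ⁻¹ • (f - Λ₁c) + τ⁻¹ • Λ₁c, Set.add_mem_add ?_ ?_, ?_⟩
  · refine ⟨τ⁻¹ • Λ₂c, ?_, ?_⟩
    · have hb := ContinuousLinearMap.opNorm_smul_le τ⁻¹ Λ₂c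
      rw [Real.norm_eq_abs, abs_of_nonneg hτinv] at hb
      have hc2 : τ⁻¹ * ‖Λ₂c‖ ≤ 1 := by
        calc τ⁻¹ * ‖Λ₂c‖ ≤ τ⁻¹ * τ := mul_le_mul_of_nonneg_left hn2 hτinv
        _ = 1 := inv_mul_cancel₀ hτ.ne'
      linarith
    · intro p hp
      have hmem : ((p.1 - x, p.2 - ybar) : X × Y) ∈ contCone G (x, ybar) := by
        have h1 := sub_mem_contCone (A := G) (a := ((x, ybar) : X × Y)) hp
        simpa [Prod.sub_def] using h1
      have h1 := hΛT _ hmem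
      have h2 : L ((p.1 - x, p.2 - ybar) : X × Y) = f (p.1 - x) := by
        simp [hLdef]
      rw [h2, hsplit] at h1
      simp only [ContinuousLinearMap.coe_smul', Pi.smul_apply,
        ContinuousLinearMap.coe_sub', Pi.sub_apply, smul_eq_mul, happ1c, happ2c]
      nlinarith [h1]
  · constructor
    · intro u hu
      have hmem : u - x ∈ contCone A x := sub_mem_contCone hu
      have h2 : infDist (u - x) (contCone A x) = 0 :=
        le_antisymm (by simpa using infDist_le_dist_of_mem (x := u - x) hmem) infDist_nonneg
      have h1 := hΛ₁le (u - x)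
      rw [h2, mul_zero] at h1
      simp only [ContinuousLinearMap.coe_smul', Pi.smul_apply, smul_eq_mul, happ1c]
      nlinarith
    · simp only [mem_setOf_eq]
      have hb := ContinuousLinearMap.opNorm_smul_le τ⁻¹ Λ₁c
      rw [Real.norm_eq_abs, abs_of_nonneg hτinv] at hb
      have hc2 : τ⁻¹ * ‖Λ₁c‖ ≤ 1 := by
        calc τ⁻¹ * ‖Λ₁c‖ ≤ τ⁻¹ * τ := mul_le_mul_of_nonneg_left hn1 hτinv
        _ = 1 := inv_mul_cancel₀ hτ.ne'
      linarith
  · rw [smul_add, smul_inv_smul₀ hτ.ne', smul_inv_smul₀ hτ.ne', sub_add_cancel]
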